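/- Let γ > |β| ≥ 0, δ > 0, μ ∈ ℝ. Then ∫_{-∞}^{∞} exp( -γ√(δ² + (x-μ)²) + β(x-μ) ) dx = (2δγ/√(γ²-β²)) K₁(δ√(γ²-β²)), where K₁ is the modified Bessel function of the third kind of order 1. -/

import Mathlib

open Real MeasureTheory

/-- The modified Bessel function of the third kind of order 1. -/
noncomputable def besselK1 (x : ℝ) : ℝ :=
  (1/2) * ∫ u in Set.Ioi (0:ℝ), Real.exp (-(x/2) * (u + u⁻¹)) * u ^ (-2 : ℝ)

lemma integrable_exp_neg_abs' : Integrable (fun s : ℝ => Real.exp (-|s|)) := by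
  have hIoi : IntegrableOn (fun s : ℝ => Real.exp (-|s|)) (Set.Ioi 0) := by
    refine ((exp_neg_integrableOn_Ioi 0 one_pos).congr_fun (fun x hx => ?_) measurableSet_Ioi)
    rw [abs_of_pos hx]; ring_nf
  have hIic : IntegrableOn (fun s : ℝ => Real.exp (-|s|)) (Set.Iic 0) := by
    rw [← Measure.map_neg_eq_self (volume : Measure ℝ)]
    have m : MeasurableEmbedding fun x : ℝ => -x := (Homeomorph.neg ℝ).measurableEmbedding
    rw [m.integrableOn_map_iff]
    simp_rw [Function.comp_def, abs_neg, Set.neg_preimage, Set.neg_Iic, neg_zero]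
    exact (integrableOn_Ici_iff_integrableOn_Ioi).mpr hIoi
  have := hIic.union hIoi
  rwa [Set.Iic_union_Ioi, integrableOn_univ] at this

lemma cosh_ge_sq_div_eight (s : ℝ) : s ^ 2 / 8 ≤ Real.cosh s := by
  have h1 : Real.exp |s| ≤ 2 * Real.cosh s := by
    rcases abs_cases s with ⟨h, _⟩ | ⟨h, _⟩ <;> rw [Real.cosh_eq, h] <;>
      nlinarith [Real.exp_pos s, Real.exp_pos (-s)]
  have h2 : s ^ 2 / 4 ≤ Real.exp |s| := by
    have h3 : Real.exp (|s| / 2) * Real.exp (|s| / 2) = Real.exp |s| := by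
      rw [← Real.exp_add]; ring_nf
    have h4 := Real.add_one_le_exp (|s| / 2)
    nlinarith [sq_abs s, abs_nonneg s]
  nlinarith

lemma integrable_A {c : ℝ} (hc : 0 < c) :
    Integrable (fun s : ℝ => Real.exp (-(c * Real.cosh s)) * Real.exp s) := by
  refine Integrable.mono' (integrable_exp_neg_abs'.const_mul (Real.exp (32 / c)))
    (Continuous.aestronglyMeasurable (by continuity)) ?_
  filter_upwards with s
  rw [Real.norm_eq_abs, abs_of_pos (by positivity), ← Real.exp_add, ← Real.exp_add]
  apply Real.exp_le_exp.mpr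
  have h1 : s ^ 2 / 8 ≤ Real.cosh s := cosh_ge_sq_div_eight s
  have h2 : s ≤ |s| := le_abs_self s
  have h3 : c * (32 / c) = 32 := by field_simp
  have h4 : 2 * |s| ≤ c * Real.cosh s + 32 / c := by
    have h5 : 0 ≤ c * Real.cosh s - c * (s ^ 2 / 8) := by nlinarith [Real.cosh_pos s]
    nlinarith [sq_nonneg (c * |s| - 8), sq_abs s, mul_pos hc hc]
  linarith

lemma integrable_A' {c : ℝ} (hc : 0 < c) :
    Integrable (fun s : ℝ => Real.exp (-(c * Real.cosh s)) * Real.exp (-s)) := by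
  have := (integrable_A hc).comp_neg
  simpa [Real.cosh_neg] using this

lemma J_symm (c : ℝ) :
    (∫ s : ℝ, Real.exp (-(c * Real.cosh s)) * Real.exp (-s)) =
      ∫ s : ℝ, Real.exp (-(c * Real.cosh s)) * Real.exp s := by
  rw [← MeasureTheory.integral_neg_eq_self
    (fun s : ℝ => Real.exp (-(c * Real.cosh s)) * Real.exp s) volume]
  simp [Real.cosh_neg]

lemma besselK1_eq (c : ℝ) :
    besselK1 c = (1 / 2) * ∫ s : ℝ, Real.exp (-(c * Real.cosh s)) * Real.exp s := by
  have himg : (fun s : ℝ => Real.exp (-s)) '' Set.univ = Set.Ioi 0 := by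
    rw [Set.image_univ]
    ext y
    constructor
    · rintro ⟨s, rfl⟩; exact Real.exp_pos _
    · intro hy; exact ⟨-Real.log y, by simp [Real.exp_log hy]⟩
  have hderiv : ∀ x ∈ (Set.univ : Set ℝ),
      HasDerivWithinAt (fun s : ℝ => Real.exp (-s)) (-Real.exp (-x)) Set.univ x := by
    intro x _
    have h : HasDerivAt (fun s : ℝ => Real.exp (-s)) (-Real.exp (-x)) x := by
      simpa [Function.comp_def] using (Real.hasDerivAt_exp (-x)).comp x (hasDerivAt_neg x)
    exact h.hasDerivWithinAt
  have hinj : Set.InjOn (fun s : ℝ => Real.exp (-s)) Set.univ := by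
    intro a _ b _ h
    have := Real.exp_eq_exp.mp h
    linarith
  have := MeasureTheory.integral_image_eq_integral_abs_deriv_smul (f' := fun x => -Real.exp (-x))
    MeasurableSet.univ hderiv hinj
    (fun u => Real.exp (-(c / 2) * (u + u⁻¹)) * u ^ (-2 : ℝ))
  rw [himg] at this
  rw [besselK1, this, Measure.restrict_univ]
  congr 1
  apply integral_congr_ae
  filter_upwards with s
  have h1 : (Real.exp (-s))⁻¹ = Real.exp s := by rw [← Real.exp_neg, neg_neg]
  have h2 : (Real.exp (-s)) ^ (-2 : ℝ) = Real.exp (2 * s) := by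
    rw [Real.rpow_def_of_pos (Real.exp_pos _), Real.log_exp]; ring_nf
  rw [abs_neg, abs_of_pos (Real.exp_pos _), smul_eq_mul, h1, h2]
  rw [show -(c / 2) * (Real.exp (-s) + Real.exp s) = -(c * Real.cosh s) by
    rw [Real.cosh_eq]; ring]
  rw [← Real.exp_add, ← Real.exp_add, ← Real.exp_add]
  ring_nf

theorem hyperbolic_normalization (γ β δ μ : ℝ) (hβ : |β| < γ) (hδ : 0 < δ) :
    ∫ x : ℝ, Real.exp (-γ * Real.sqrt (δ^2 + (x - μ)^2) + β * (x - μ)) =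
    (2 * δ * γ / Real.sqrt (γ^2 - β^2)) *
      besselK1 (δ * Real.sqrt (γ^2 - β^2)) := by
  have hγ : 0 < γ := lt_of_le_of_lt (abs_nonneg β) hβ
  have hβγ : β ^ 2 < γ ^ 2 := by
    have := sq_abs β
    nlinarith [abs_nonneg β]
  set α : ℝ := Real.sqrt (γ ^ 2 - β ^ 2) with hα_def
  have hα : 0 < α := Real.sqrt_pos.mpr (by linarith)
  have hα2 : α ^ 2 = γ ^ 2 - β ^ 2 := Real.sq_sqrt (by linarith)
  set t₀ : ℝ := Real.arsinh (β / α) with ht₀_def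
  have hsinh : Real.sinh t₀ = β / α := Real.sinh_arsinh _
  have hcosh : Real.cosh t₀ = γ / α := by
    rw [ht₀_def, Real.cosh_arsinh]
    have h1 : 1 + (β / α) ^ 2 = (γ / α) ^ 2 := by
      field_simp
      linarith [hα2]
    rw [h1, Real.sqrt_sq (by positivity)]
  set c : ℝ := δ * α with hc_def
  have hc : 0 < c := mul_pos hδ hα
  -- substitution x = μ + δ * sinh (s + t₀)
  have himg : (fun s : ℝ => μ + δ * Real.sinh (s + t₀)) '' Set.univ = Set.univ := by
    rw [Set.image_univ, Set.range_eq_univ]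
    intro y
    refine ⟨Real.arsinh ((y - μ) / δ) - t₀, ?_⟩
    dsimp only
    rw [sub_add_cancel, Real.sinh_arsinh]
    field_simp; ring
  have hderiv : ∀ x ∈ (Set.univ : Set ℝ),
      HasDerivWithinAt (fun s : ℝ => μ + δ * Real.sinh (s + t₀))
        (δ * Real.cosh (x + t₀)) Set.univ x := by
    intro x _
    have h1 : HasDerivAt (fun s : ℝ => Real.sinh (s + t₀)) (Real.cosh (x + t₀)) x := by
      simpa [Function.comp_def] using (Real.hasDerivAt_sinh (x + t₀)).comp x ((hasDerivAt_id x).add_const t₀)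
    exact (((h1.const_mul δ).const_add μ)).hasDerivWithinAt
  have hinj : Set.InjOn (fun s : ℝ => μ + δ * Real.sinh (s + t₀)) Set.univ := by
    intro a _ b _ h
    dsimp only at h
    have h2 : Real.sinh (a + t₀) = Real.sinh (b + t₀) :=
      mul_left_cancel₀ (ne_of_gt hδ) (add_left_cancel h)
    have := Real.sinh_injective h2
    linarith
  have hsubst := MeasureTheory.integral_image_eq_integral_abs_deriv_smul
    (f' := fun x => δ * Real.cosh (x + t₀)) MeasurableSet.univ hderiv hinj
    (fun x => Real.exp (-γ * Real.sqrt (δ^2 + (x - μ)^2) + β * (x - μ)))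
  rw [himg, Measure.restrict_univ] at hsubst
  rw [hsubst]
  have hstep : ∀ s : ℝ,
      |δ * Real.cosh (s + t₀)| •
        Real.exp (-γ * Real.sqrt (δ^2 + (μ + δ * Real.sinh (s + t₀) - μ)^2) +
          β * (μ + δ * Real.sinh (s + t₀) - μ)) =
      (δ * Real.exp t₀ / 2) * (Real.exp (-(c * Real.cosh s)) * Real.exp s) +
        (δ * Real.exp (-t₀) / 2) * (Real.exp (-(c * Real.cosh s)) * Real.exp (-s)) := by
    intro s
    have hch : 0 < Real.cosh (s + t₀) := Real.cosh_pos _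
    have hsqrt : Real.sqrt (δ ^ 2 + (δ * Real.sinh (s + t₀)) ^ 2) = δ * Real.cosh (s + t₀) := by
      rw [show δ ^ 2 + (δ * Real.sinh (s + t₀)) ^ 2 = (δ * Real.cosh (s + t₀)) ^ 2 by
        have := Real.cosh_sq (s + t₀); nlinarith,
        Real.sqrt_sq (by positivity)]
    have hexp : -γ * (δ * Real.cosh (s + t₀)) + β * (δ * Real.sinh (s + t₀)) =
        -(c * Real.cosh s) := by
      rw [Real.cosh_add, Real.sinh_add, hsinh, hcosh, hc_def]
      field_simp
      linear_combination (Real.cosh s) * hα2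
    rw [add_sub_cancel_left, hsqrt, hexp, smul_eq_mul,
      abs_of_pos (mul_pos hδ hch), Real.cosh_add, Real.cosh_eq t₀, Real.sinh_eq t₀,
      Real.cosh_eq s, Real.sinh_eq s]
    ring
  rw [integral_congr_ae (Filter.Eventually.of_forall hstep)]
  rw [integral_add ((integrable_A hc).const_mul _) ((integrable_A' hc).const_mul _),
    MeasureTheory.integral_const_mul, MeasureTheory.integral_const_mul, J_symm]
  rw [besselK1_eq c]
  have hJ : (δ * Real.exp t₀ / 2) * (∫ s : ℝ, Real.exp (-(c * Real.cosh s)) * Real.exp s) +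
      (δ * Real.exp (-t₀) / 2) * (∫ s : ℝ, Real.exp (-(c * Real.cosh s)) * Real.exp s) =
      (δ * Real.cosh t₀) * (∫ s : ℝ, Real.exp (-(c * Real.cosh s)) * Real.exp s) := by
    rw [Real.cosh_eq]; ring
  rw [hJ, hcosh]
  field_simp
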